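/- Suppose a,b,c,d,e,f ∈ ℚ satisfy a²+b²+c² = m, d²+e²+f² = m, ad+be+cf = 0, and bd − ae ≠ m. Then m = (m(d−b)/(bd−ae−m))² + (m(a+e)/(bd−ae−m))², i.e., m is explicitly a sum of two rational squares. -/

import Mathlib

theorem stmt_14 (a b c d e f m : ℚ)
    (h1 : a ^ 2 + b ^ 2 + c ^ 2 = m) (h2 : d ^ 2 + e ^ 2 + f ^ 2 = m)
    (h3 : a * d + b * e + c * f = 0) (h4 : b * d - a * e ≠ m) :
    m = (m * (d - b) / (b * d - a * e - m)) ^ 2 +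
        (m * (a + e) / (b * d - a * e - m)) ^ 2 := by
  have hs : b * d - a * e - m ≠ 0 := sub_ne_zero.mpr h4
  rw [div_pow, div_pow, ← add_div, eq_div_iff (pow_ne_zero 2 hs)]
  linear_combination m * (c * f - a * d - b * e) * h3 - m * f ^ 2 * h1 +
    m * (a ^ 2 + b ^ 2 - m) * h2
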